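/- Let A be a primitive 4r-th root of unity, r ≥ 3, and for 0 ≤ i, j ≤ r-2 define s̃_{ij} = (-1)^{i+j} [(i+1)(j+1)]_A, where [m]_A = (A^{2m} - A^{-2m})/(A^2 - A^{-2}). Then the (r-1)×(r-1) matrix s̃ satisfies s̃^2 = (-2r/(A^2 - A^{-2})^2) · Id; in particular s̃ is nonsingular. -/

import Mathlib

open Finset

lemma geom_shift (x : ℂ) (hx : x ≠ 1) (N : ℕ) :
    ∑ n ∈ Finset.range N, x ^ (n + 1) = (x ^ (N + 1) - 1) / (x - 1) - 1 := by
  have h := geom_sum_eq hx (N + 1)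
  rw [Finset.sum_range_succ'] at h
  simpa using (by linear_combination h : ∑ n ∈ Finset.range N, x ^ (n+1) = (x ^ (N + 1) - 1) / (x - 1) - 1)

lemma Fval (r : ℕ) (hr : 3 ≤ r) (q : ℂ) (hq : IsPrimitiveRoot q (2 * r)) (m : ℤ) :
    ∑ n ∈ Finset.range (r - 1), (q ^ (m * ((n : ℤ) + 1)) + q ^ (-(m * ((n : ℤ) + 1)))) =
      if (2 * r : ℤ) ∣ m then (2 * r - 2 : ℂ) else -(q ^ (m * (r : ℤ))) - 1 := by
  have hq0 : q ≠ 0 := hq.ne_zero (by omega)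
  set x : ℂ := q ^ m with hx
  have hx0 : x ≠ 0 := zpow_ne_zero _ hq0
  have hterm : ∀ n : ℕ, q ^ (m * ((n : ℤ) + 1)) + q ^ (-(m * ((n : ℤ) + 1)))
      = x ^ (n + 1) + (x⁻¹) ^ (n + 1) := by
    intro n
    have h1 : x ^ (n + 1) = q ^ (m * ((n : ℤ) + 1)) := by
      rw [hx, ← zpow_natCast (q ^ m), ← zpow_mul]; push_cast; ring_nf
    have h2 : (x⁻¹) ^ (n + 1) = q ^ (-(m * ((n : ℤ) + 1))) := by
      rw [inv_pow, h1, ← zpow_neg]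
    rw [h1, h2]
  rw [Finset.sum_congr rfl fun n _ => hterm n, Finset.sum_add_distrib]
  by_cases hdvd : (2 * r : ℤ) ∣ m
  · have hx1 : x = 1 := by
      rw [hx, (hq.zpow_eq_one_iff_dvd m)]; exact_mod_cast hdvd
    rw [if_pos hdvd, hx1]
    simp only [inv_one, one_pow, Finset.sum_const, Finset.card_range, nsmul_eq_mul]
    push_cast [Nat.cast_sub (by omega : 1 ≤ r)]
    ring
  · have hx1 : x ≠ 1 := by
      rw [hx, Ne, hq.zpow_eq_one_iff_dvd m]; exact_mod_cast hdvd
    have hxi1 : x⁻¹ ≠ 1 := by simpa [inv_eq_one] using hx1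
    have hN : r - 1 + 1 = r := by omega
    have he : x ^ r = q ^ (m * (r : ℤ)) := by
      rw [hx, ← zpow_natCast (q ^ m), ← zpow_mul]
    have he2 : (x ^ r) * (x ^ r) = 1 := by
      rw [he, ← zpow_add₀ hq0]
      rw [show m * (r:ℤ) + m * (r:ℤ) = (2 * (r:ℤ)) * m by ring, zpow_mul]
      have h1 : q ^ ((2 * r : ℕ) : ℤ) = 1 := hq.zpow_eq_one
      rw [show ((2:ℤ) * (r:ℤ)) = ((2 * r : ℕ) : ℤ) by push_cast; ring, h1, one_zpow]
    have hei : (x ^ r)⁻¹ = x ^ r := inv_eq_of_mul_eq_one_right he2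
    rw [geom_shift x hx1, geom_shift x⁻¹ hxi1, hN, inv_pow, hei, he, if_neg hdvd]
    set e := q ^ (m * (r : ℤ)) with hee
    have h1 : x - 1 ≠ 0 := sub_ne_zero.mpr hx1
    have h2 : x⁻¹ - 1 ≠ 0 := sub_ne_zero.mpr hxi1
    have h3 : (1 : ℂ) - x ≠ 0 := sub_ne_zero.mpr (Ne.symm hx1)
    field_simp
    ring

/-- The quantum integer `[m]_A = (A^{2m} - A^{-2m})/(A^2 - A^{-2})`. -/
noncomputable def qint (A : ℂ) (m : ℤ) : ℂ :=
  (A ^ (2 * m) - A ^ (-(2 * m))) / (A ^ (2 : ℤ) - A ^ (-2 : ℤ))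

theorem smatrix_nonsingular (r : ℕ) (hr : 3 ≤ r) (A : ℂ)
    (hA : IsPrimitiveRoot A (4 * r))
    (S : Matrix (Fin (r - 1)) (Fin (r - 1)) ℂ)
    (hS : ∀ i j : Fin (r - 1),
      S i j = (-1 : ℂ) ^ ((i : ℕ) + (j : ℕ)) *
        qint A ((((i : ℕ) + 1) * ((j : ℕ) + 1) : ℕ))) :
    S * S = ((-2 * r : ℂ) / (A ^ (2 : ℤ) - A ^ (-2 : ℤ)) ^ 2) • 1 ∧ IsUnit S := by
  have hA0 : A ≠ 0 := hA.ne_zero (by omega)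
  have hq : IsPrimitiveRoot (A ^ 2) (2 * r) := hA.pow (by omega) (by ring)
  set q : ℂ := A ^ 2 with hqdef
  have hq0 : q ≠ 0 := pow_ne_zero _ hA0
  have hA2 : A ^ (2 : ℤ) = q := by rw [hqdef]; exact_mod_cast zpow_natCast A 2
  have hAm2 : A ^ (-2 : ℤ) = q⁻¹ := by rw [zpow_neg, hA2]
  have hq21 : q ^ 2 ≠ 1 := hq.pow_ne_one_of_pos_of_lt (by omega) (by omega)
  have hd : q - q⁻¹ ≠ 0 := by
    intro h
    apply hq21
    have h' : q = q⁻¹ := sub_eq_zero.mp h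
    calc q ^ 2 = q * q := sq q
      _ = q * q⁻¹ := by rw [← h']
      _ = 1 := mul_inv_cancel₀ hq0
  have hqint : ∀ m : ℤ, qint A m = (q ^ m - q ^ (-m)) / (q - q⁻¹) := by
    intro m
    unfold qint
    rw [show -(2 * m) = 2 * (-m) by ring, zpow_mul A 2 m, zpow_mul A 2 (-m), hA2, hAm2]
  have hq2r : q ^ (2 * (r : ℤ)) = 1 := by
    have h1 : q ^ ((2 * r : ℕ) : ℤ) = 1 := hq.zpow_eq_one
    rw [show (2 * (r:ℤ)) = ((2 * r : ℕ) : ℤ) by push_cast; ring, h1]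
  have expand : ∀ (a c n : ℤ), (q ^ (a*n) - q ^ (-(a*n))) * (q ^ (n*c) - q ^ (-(n*c)))
      = (q ^ ((a+c)*n) + q ^ (-((a+c)*n))) - (q ^ ((a-c)*n) + q ^ (-((a-c)*n))) := by
    intro a c n
    rw [show -((a+c)*n) = -(a*n) + -(n*c) by ring, show -((a-c)*n) = -(a*n) + n*c by ring,
        show (a+c)*n = a*n + n*c by ring, show (a-c)*n = a*n + -(n*c) by ring,
        zpow_add₀ hq0, zpow_add₀ hq0, zpow_add₀ hq0, zpow_add₀ hq0]
    ring
  have hmain : S * S = ((-2 * r : ℂ) / (A ^ (2 : ℤ) - A ^ (-2 : ℤ)) ^ 2) • 1 := by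
    rw [hA2, hAm2]
    ext i k
    set a : ℤ := ((i : ℕ) : ℤ) + 1 with ha
    set c : ℤ := ((k : ℕ) : ℤ) + 1 with hc
    rw [Matrix.mul_apply]
    have step1 : ∀ j : Fin (r - 1), S i j * S j k
        = (-1:ℂ) ^ ((i:ℕ)+(k:ℕ)) / (q - q⁻¹) ^ 2 *
          ((q ^ ((a+c)*(((j:ℕ):ℤ)+1)) + q ^ (-((a+c)*(((j:ℕ):ℤ)+1))))
            - (q ^ ((a-c)*(((j:ℕ):ℤ)+1)) + q ^ (-((a-c)*(((j:ℕ):ℤ)+1))))) := by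
      intro j
      have signs : (-1:ℂ) ^ ((i:ℕ)+(j:ℕ)) * (-1:ℂ) ^ ((j:ℕ)+(k:ℕ)) = (-1:ℂ) ^ ((i:ℕ)+(k:ℕ)) := by
        rw [← pow_add, show (i:ℕ)+(j:ℕ)+((j:ℕ)+(k:ℕ)) = ((i:ℕ)+(k:ℕ))+2*(j:ℕ) by ring,
          pow_add, pow_mul, neg_one_sq, one_pow, mul_one]
      rw [hS i j, hS j k, hqint, hqint]
      have harg1 : ((((i:ℕ)+1)*((j:ℕ)+1) : ℕ) : ℤ) = a * (((j:ℕ):ℤ)+1) := by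
        rw [ha]; push_cast; ring
      have harg2 : ((((j:ℕ)+1)*((k:ℕ)+1) : ℕ) : ℤ) = (((j:ℕ):ℤ)+1) * c := by
        rw [hc]; push_cast; ring
      rw [harg1, harg2, ← expand a c (((j:ℕ):ℤ)+1), ← signs]
      field_simp
    rw [Finset.sum_congr rfl fun j _ => step1 j, ← Finset.mul_sum]
    rw [Fin.sum_univ_eq_sum_range (fun j =>
      (q ^ ((a+c)*(((j:ℕ):ℤ)+1)) + q ^ (-((a+c)*(((j:ℕ):ℤ)+1))))
        - (q ^ ((a-c)*(((j:ℕ):ℤ)+1)) + q ^ (-((a-c)*(((j:ℕ):ℤ)+1)))))]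
    rw [Finset.sum_sub_distrib, Fval r hr q hq (a+c), Fval r hr q hq (a-c)]
    have hib : (i : ℕ) ≤ r - 2 := by have := i.isLt; omega
    have hkb : (k : ℕ) ≤ r - 2 := by have := k.isLt; omega
    have hndvd1 : ¬ (2 * (r:ℤ)) ∣ (a + c) := by
      intro h
      have h1 : (0:ℤ) < a + c := by rw [ha, hc]; omega
      have h2 := Int.le_of_dvd h1 h
      rw [ha, hc] at h2; omega
    by_cases hik : i = k
    · subst hik
      have hdvd2 : (2 * (r:ℤ)) ∣ (a - a) := by simp
      rw [if_neg hndvd1, if_pos hdvd2]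
      have hval : q ^ ((a+a)*(r:ℤ)) = 1 := by
        rw [show (a+a)*(r:ℤ) = (2*(r:ℤ))*a by ring, zpow_mul, hq2r, one_zpow]
      rw [hval]
      rw [Matrix.smul_apply, Matrix.one_apply_eq, smul_eq_mul, mul_one]
      rw [show (i:ℕ)+(i:ℕ) = 2*(i:ℕ) by ring, pow_mul, neg_one_sq, one_pow]
      field_simp
      ring
    · have hvk : (i:ℕ) ≠ (k:ℕ) := fun h => hik (Fin.ext h)
      have hndvd2 : ¬ (2 * (r:ℤ)) ∣ (a - c) := by
        intro h
        have h0 : a - c ≠ 0 := by rw [ha, hc]; omega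
        have h1 : (0:ℤ) < |a - c| := abs_pos.mpr h0
        have h2 := Int.le_of_dvd h1 ((dvd_abs _ _).mpr h)
        have h3 : |a - c| ≤ (r:ℤ) - 2 := abs_le.mpr ⟨by rw [ha, hc]; omega, by rw [ha, hc]; omega⟩
        omega
      rw [if_neg hndvd1, if_neg hndvd2]
      have hvaleq : q ^ ((a+c)*(r:ℤ)) = q ^ ((a-c)*(r:ℤ)) := by
        have h4 : q ^ ((2*(r:ℤ))*c) = 1 := by rw [zpow_mul, hq2r, one_zpow]
        rw [show (a+c)*(r:ℤ) = (a-c)*(r:ℤ) + (2*(r:ℤ))*c by ring, zpow_add₀ hq0, h4, mul_one]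
      rw [hvaleq]
      rw [Matrix.smul_apply, Matrix.one_apply_ne hik, smul_eq_mul, mul_zero]
      ring
  refine ⟨hmain, ?_⟩
  have hc0 : ((-2 * r : ℂ) / (A ^ (2 : ℤ) - A ^ (-2 : ℤ)) ^ 2) ≠ 0 := by
    rw [hA2, hAm2]
    apply div_ne_zero
    · have : (r:ℂ) ≠ 0 := Nat.cast_ne_zero.mpr (by omega)
      simp [this]
    · exact pow_ne_zero 2 hd
  set cc : ℂ := (-2 * r : ℂ) / (A ^ (2 : ℤ) - A ^ (-2 : ℤ)) ^ 2 with hccdef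
  have h1 : S * (cc⁻¹ • S) = 1 := by
    rw [Matrix.mul_smul, hmain, smul_smul, inv_mul_cancel₀ hc0, one_smul]
  have h2 : (cc⁻¹ • S) * S = 1 := by
    rw [Matrix.smul_mul, hmain, smul_smul, inv_mul_cancel₀ hc0, one_smul]
  exact ⟨⟨S, cc⁻¹ • S, h1, h2⟩, rfl⟩
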